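/- For the 24 points x^σ_ε = (3, 2σ+2ε, 0) and y^σ_ε = (3, 0, 2σ+2ε) in quaternionic hyperbolic plane H²_ℍ, where σ ∈ {+1,−1} and ε ∈ {±i,±j,±k}, one has ∑ d(x^σ_ε, x^ρ_δ) + ∑ d(y^σ_ε, y^ρ_δ) − ∑ d(x^σ_ε, y^ρ_δ) > 0; hence the geodesic distance on H²_ℍ is not a kernel of negative type. -/

import Mathlib

open Quaternion

/-- The quaternionic hermitian form `⟨z,w⟩ = −z̄⁰w⁰ + z̄¹w¹ + z̄²w²` on `ℍ³`. -/
noncomputable def qForm (z w : Fin 3 → Quaternion ℝ) : Quaternion ℝ :=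
  -(star (z 0) * w 0) + star (z 1) * w 1 + star (z 2) * w 2

/-- The inverse hyperbolic cosine on `[1, ∞)`. -/
noncomputable def arcosh (x : ℝ) : ℝ := Real.log (x + Real.sqrt (x ^ 2 - 1))

/-- Geodesic distance on quaternionic hyperbolic plane `H²_ℍ`:
`cosh d(x,y) = |⟨x,y⟩| / (⟨x,x⟩⟨y,y⟩)^{1/2}` for negative vectors `x, y`. -/
noncomputable def qhypDist (x y : Fin 3 → Quaternion ℝ) : ℝ :=
  arcosh (‖qForm x y‖ / Real.sqrt ((qForm x x).re * (qForm y y).re))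

/-- The twelve quaternions `2σ + 2ε`, `σ ∈ {1,−1}`, `ε ∈ {±i, ±j, ±k}`. -/
noncomputable def qParam : Fin 12 → Quaternion ℝ :=
  ![2 + 2 * ⟨0,1,0,0⟩, 2 - 2 * ⟨0,1,0,0⟩, 2 + 2 * ⟨0,0,1,0⟩, 2 - 2 * ⟨0,0,1,0⟩,
    2 + 2 * ⟨0,0,0,1⟩, 2 - 2 * ⟨0,0,0,1⟩,
    -2 + 2 * ⟨0,1,0,0⟩, -2 - 2 * ⟨0,1,0,0⟩, -2 + 2 * ⟨0,0,1,0⟩, -2 - 2 * ⟨0,0,1,0⟩,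
    -2 + 2 * ⟨0,0,0,1⟩, -2 - 2 * ⟨0,0,0,1⟩]

/-! ### Auxiliary lemmas -/

lemma QH.qnorm_eq (a : ℍ[ℝ]) : ‖a‖ = Real.sqrt (normSq a) := by
  rw [Quaternion.normSq_eq_norm_mul_self, Real.sqrt_mul_self (norm_nonneg a)]

lemma QH.re9 : (9:ℍ[ℝ]).re = 9 := rfl
lemma QH.norm9 : ‖(9:ℍ[ℝ])‖ = 9 := by
  rw [show (9:ℍ[ℝ]) = ((9:ℝ):ℍ[ℝ]) from rfl, Quaternion.norm_coe]; norm_num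

lemma QH.qForm_xx (a b : ℍ[ℝ]) : qForm ![3,a,0] ![3,b,0] = -9 + star a * b := by
  simp [qForm]; norm_num

lemma QH.qForm_xy (a b : ℍ[ℝ]) : qForm ![3,a,0] ![3,0,b] = -9 := by
  simp [qForm]; norm_num

lemma QH.qForm_yx (a b : ℍ[ℝ]) : qForm ![3,0,a] ![3,b,0] = -9 := by
  simp [qForm]; norm_num

lemma QH.qForm_yy (a b : ℍ[ℝ]) : qForm ![3,0,a] ![3,0,b] = -9 + star a * b := by
  simp [qForm]; norm_num

lemma QH.normSq_neg9_add (c : ℍ[ℝ]) :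
    normSq ((-9 : ℍ[ℝ]) + c) = normSq c - 18 * c.re + 81 := by
  simp [Quaternion.normSq_def', QH.re9, show (9:ℍ[ℝ]).imI = 0 from rfl,
    show (9:ℍ[ℝ]).imJ = 0 from rfl, show (9:ℍ[ℝ]).imK = 0 from rfl]
  ring

lemma QH.re_neg9_add (c : ℍ[ℝ]) : ((-9 : ℍ[ℝ]) + c).re = -9 + c.re := by
  simp [QH.re9]

lemma QH.star_mul_self_re (c : ℍ[ℝ]) : (star c * c).re = normSq c := by
  simp [Quaternion.re_mul, Quaternion.normSq_def']; ring

lemma QH.reXX (a : ℍ[ℝ]) (ha : normSq a = 8) :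
    (qForm ![3,a,0] ![3,a,0]).re = -1 := by
  rw [QH.qForm_xx, QH.re_neg9_add, QH.star_mul_self_re, ha]; norm_num

lemma QH.reYY (a : ℍ[ℝ]) (ha : normSq a = 8) :
    (qForm ![3,0,a] ![3,0,a]).re = -1 := by
  rw [QH.qForm_yy, QH.re_neg9_add, QH.star_mul_self_re, ha]; norm_num

lemma QH.dist_xx (a b : ℍ[ℝ]) (r : ℝ) (ha : normSq a = 8) (hb : normSq b = 8)
    (hr : (star a * b).re = r) :
    qhypDist ![3,a,0] ![3,b,0] = arcosh (Real.sqrt (145 - 18*r)) := by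
  have hnum : ‖qForm ![3,a,0] ![3,b,0]‖ = Real.sqrt (145 - 18*r) := by
    rw [QH.qForm_xx, QH.qnorm_eq, QH.normSq_neg9_add, hr]
    have : normSq (star a * b) = 64 := by
      rw [map_mul, Quaternion.normSq_star, ha, hb]; norm_num
    rw [this]; ring_nf
  rw [qhypDist, hnum, QH.reXX a ha, QH.reXX b hb]
  norm_num

lemma QH.dist_yy (a b : ℍ[ℝ]) (r : ℝ) (ha : normSq a = 8) (hb : normSq b = 8)
    (hr : (star a * b).re = r) :
    qhypDist ![3,0,a] ![3,0,b] = arcosh (Real.sqrt (145 - 18*r)) := by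
  have hnum : ‖qForm ![3,0,a] ![3,0,b]‖ = Real.sqrt (145 - 18*r) := by
    rw [QH.qForm_yy, QH.qnorm_eq, QH.normSq_neg9_add, hr]
    have : normSq (star a * b) = 64 := by
      rw [map_mul, Quaternion.normSq_star, ha, hb]; norm_num
    rw [this]; ring_nf
  rw [qhypDist, hnum, QH.reYY a ha, QH.reYY b hb]
  norm_num

lemma QH.dist_xy (a b : ℍ[ℝ]) (ha : normSq a = 8) (hb : normSq b = 8) :
    qhypDist ![3,a,0] ![3,0,b] = arcosh 9 := by
  rw [qhypDist, QH.qForm_xy, QH.reXX a ha, QH.reYY b hb, norm_neg, QH.norm9]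
  norm_num

lemma QH.dist_yx (a b : ℍ[ℝ]) (ha : normSq a = 8) (hb : normSq b = 8) :
    qhypDist ![3,0,a] ![3,b,0] = arcosh 9 := by
  rw [qhypDist, QH.qForm_yx, QH.reYY a ha, QH.reXX b hb, norm_neg, QH.norm9]
  norm_num

lemma QH.two_mul_mk (a b c d : ℝ) :
    (2:ℍ[ℝ]) * ⟨a,b,c,d⟩ = ⟨2*a,2*b,2*c,2*d⟩ := by
  ext
  · refine (QuaternionAlgebra.re_mul _ _).trans ?_
    norm_num [show (2:ℍ[ℝ]).re = 2 from rfl, show (2:ℍ[ℝ]).imI = 0 from rfl, show (2:ℍ[ℝ]).imJ = 0 from rfl, show (2:ℍ[ℝ]).imK = 0 from rfl]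
  · refine (QuaternionAlgebra.imI_mul _ _).trans ?_
    norm_num [show (2:ℍ[ℝ]).re = 2 from rfl, show (2:ℍ[ℝ]).imI = 0 from rfl, show (2:ℍ[ℝ]).imJ = 0 from rfl, show (2:ℍ[ℝ]).imK = 0 from rfl]
  · refine (QuaternionAlgebra.imJ_mul _ _).trans ?_
    norm_num [show (2:ℍ[ℝ]).re = 2 from rfl, show (2:ℍ[ℝ]).imI = 0 from rfl, show (2:ℍ[ℝ]).imJ = 0 from rfl, show (2:ℍ[ℝ]).imK = 0 from rfl]
  · refine (QuaternionAlgebra.imK_mul _ _).trans ?_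
    norm_num [show (2:ℍ[ℝ]).re = 2 from rfl, show (2:ℍ[ℝ]).imI = 0 from rfl, show (2:ℍ[ℝ]).imJ = 0 from rfl, show (2:ℍ[ℝ]).imK = 0 from rfl]

lemma QH.add_mk (x : ℍ[ℝ]) (a b c d : ℝ) :
    x + ⟨a,b,c,d⟩ = ⟨x.re+a, x.imI+b, x.imJ+c, x.imK+d⟩ := by
  ext <;> rfl

lemma QH.sub_mk (x : ℍ[ℝ]) (a b c d : ℝ) :
    x - ⟨a,b,c,d⟩ = ⟨x.re-a, x.imI-b, x.imJ-c, x.imK-d⟩ := by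
  ext <;> rfl

lemma QH.star_mk (a b c d : ℝ) :
    star (⟨a,b,c,d⟩ : ℍ[ℝ]) = ⟨a,-b,-c,-d⟩ := by
  ext
  · refine (QuaternionAlgebra.re_star _).trans ?_
    simp
  · exact QuaternionAlgebra.imI_star _
  · exact QuaternionAlgebra.imJ_star _
  · exact QuaternionAlgebra.imK_star _

lemma QH.re_mul_mk (a b c d e f g h : ℝ) :
    ((⟨a,b,c,d⟩ : ℍ[ℝ]) * ⟨e,f,g,h⟩).re = a*e - b*f - c*g - d*h := by
  refine (QuaternionAlgebra.re_mul _ _).trans ?_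
  simp; ring

lemma QH.normSq_mk (a b c d : ℝ) :
    normSq (⟨a,b,c,d⟩ : ℍ[ℝ]) = a^2 + b^2 + c^2 + d^2 := by
  exact Quaternion.normSq_def' _

lemma QH.re_star_mul_mk (a b c d e f g h : ℝ) :
    (star (⟨a,b,c,d⟩ : ℍ[ℝ]) * ⟨e,f,g,h⟩).re = a*e + b*f + c*g + d*h := by
  rw [QH.star_mk, QH.re_mul_mk]; ring

lemma QH.hnormSq : ∀ p, normSq (qParam p) = 8 := by
  simp only [Fin.forall_fin_succ, qParam, Matrix.cons_val_zero, Matrix.cons_val_succ]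
  norm_num [QH.two_mul_mk, QH.add_mk, QH.sub_mk, QH.normSq_mk, Quaternion.normSq_def', Quaternion.ext_iff, Quaternion.re_mul, Quaternion.imI_mul,
    Quaternion.imJ_mul, Quaternion.imK_mul, show (2:ℍ[ℝ]).re = 2 from rfl,
    show (2:ℍ[ℝ]).imI = 0 from rfl, show (2:ℍ[ℝ]).imJ = 0 from rfl,
    show (2:ℍ[ℝ]).imK = 0 from rfl]

/-- The distance matrix entry for two points of the same type. -/
noncomputable def QHF (p q : Fin 12) : ℝ :=
  arcosh (Real.sqrt (145 - 18 * (star (qParam p) * qParam q).re))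

lemma QH.arcosh_one : arcosh 1 = 0 := by simp [arcosh]

lemma QH.hdx (p q : Fin 12) :
    qhypDist ![3, qParam p, 0] ![3, qParam q, 0] = QHF p q :=
  QH.dist_xx _ _ _ (QH.hnormSq p) (QH.hnormSq q) rfl

lemma QH.hdy (p q : Fin 12) :
    qhypDist ![3, 0, qParam p] ![3, 0, qParam q] = QHF p q :=
  QH.dist_yy _ _ _ (QH.hnormSq p) (QH.hnormSq q) rfl

lemma QH.hdxy (p q : Fin 12) :
    qhypDist ![3, qParam p, 0] ![3, 0, qParam q] = arcosh 9 :=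
  QH.dist_xy _ _ (QH.hnormSq p) (QH.hnormSq q)

lemma QH.hdyx (p q : Fin 12) :
    qhypDist ![3, 0, qParam p] ![3, qParam q, 0] = arcosh 9 :=
  QH.dist_yx _ _ (QH.hnormSq p) (QH.hnormSq q)

lemma QH.Fsymm (p q : Fin 12) : QHF p q = QHF q p := by
  unfold QHF
  congr 3
  simp [Quaternion.re_mul]; ring

lemma QH.Fdiag (p : Fin 12) : QHF p p = 0 := by
  unfold QHF
  rw [QH.star_mul_self_re, QH.hnormSq p]
  norm_num [QH.arcosh_one]

lemma QH.re_star_mul_qParam (p q : Fin 12) :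
    (star (qParam p) * qParam q).re = (qParam p).re * (qParam q).re +
      (qParam p).imI * (qParam q).imI + (qParam p).imJ * (qParam q).imJ +
      (qParam p).imK * (qParam q).imK := by
  simp [Quaternion.re_mul]

lemma QH.qParam_re (p : Fin 12) :
    (qParam p).re = ![2, 2, 2, 2, 2, 2, -2, -2, -2, -2, -2, -2] p := by
  fin_cases p <;> simp [qParam, QH.two_mul_mk, QH.add_mk, QH.sub_mk] <;> rfl

lemma QH.qParam_imI (p : Fin 12) :
    (qParam p).imI = ![2, -2, 0, 0, 0, 0, 2, -2, 0, 0, 0, 0] p := by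
  fin_cases p <;> simp [qParam, QH.two_mul_mk, QH.add_mk, QH.sub_mk] <;> rfl

lemma QH.qParam_imJ (p : Fin 12) :
    (qParam p).imJ = ![0, 0, 2, -2, 0, 0, 0, 0, 2, -2, 0, 0] p := by
  fin_cases p <;> simp [qParam, QH.two_mul_mk, QH.add_mk, QH.sub_mk] <;> rfl

lemma QH.qParam_imK (p : Fin 12) :
    (qParam p).imK = ![0, 0, 0, 0, 2, -2, 0, 0, 0, 0, 2, -2] p := by
  fin_cases p <;> simp [qParam, QH.two_mul_mk, QH.add_mk, QH.sub_mk] <;> rfl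

/-- The common value of each row sum of the distance matrix. -/
noncomputable def QHC : ℝ :=
  2 * arcosh (Real.sqrt 145) + arcosh (Real.sqrt 289) +
    4 * arcosh (Real.sqrt 73) + 4 * arcosh (Real.sqrt 217)

set_option maxHeartbeats 2000000 in
lemma QH.rowfull : ∀ p : Fin 12, ∑ q, QHF p q = QHC := by
  intro p
  fin_cases p <;>
  · simp only [QHF, QH.re_star_mul_qParam, QH.qParam_re, QH.qParam_imI, QH.qParam_imJ,
      QH.qParam_imK, Fin.sum_univ_succ, Matrix.cons_val_succ', Matrix.cons_val_zero',
      Matrix.cons_val_zero, Matrix.cons_val_succ, Fin.zero_eta, Fin.mk_one, Finset.univ_eq_empty,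
      Finset.sum_empty]
    norm_num [QHF, QHC, Fin.sum_univ_succ, qParam, Quaternion.re_mul, QH.two_mul_mk, QH.add_mk,
      QH.sub_mk,
      Matrix.cons_val_succ', Matrix.cons_val_zero',
      show (2:ℍ[ℝ]).re = 2 from rfl, show (2:ℍ[ℝ]).imI = 0 from rfl,
      show (2:ℍ[ℝ]).imJ = 0 from rfl, show (2:ℍ[ℝ]).imK = 0 from rfl,
      QH.arcosh_one]
    ring

lemma QH.sumfull : ∑ p, ∑ q, QHF p q = 12 * QHC := by
  rw [Finset.sum_congr rfl fun p _ => QH.rowfull p, Finset.sum_const]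
  simp

lemma QH.sumlt : (∑ p, ∑ q, if p < q then QHF p q else 0) = 6 * QHC := by
  have split : ∀ p q : Fin 12, QHF p q =
      (if p < q then QHF p q else 0) + (if q < p then QHF p q else 0) +
        (if p = q then QHF p q else 0) := by
    intro p q
    rcases lt_trichotomy p q with h | h | h
    · simp [h, asymm h, ne_of_lt h]
    · subst h; simp
    · simp [h, asymm h, ne_of_gt h]
  have h1 : ∑ p, ∑ q, QHF p q =
      (∑ p, ∑ q, if p < q then QHF p q else 0) +
      (∑ p, ∑ q, if q < p then QHF p q else 0) +
      (∑ p, ∑ q, if p = q then QHF p q else 0) := by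
    rw [← Finset.sum_add_distrib, ← Finset.sum_add_distrib]
    refine Finset.sum_congr rfl fun p _ => ?_
    rw [← Finset.sum_add_distrib, ← Finset.sum_add_distrib]
    exact Finset.sum_congr rfl fun q _ => split p q
  have h2 : (∑ p, ∑ q, if q < p then QHF p q else 0) =
      (∑ p, ∑ q, if p < q then QHF p q else 0) := by
    rw [Finset.sum_comm]
    refine Finset.sum_congr rfl fun p _ => Finset.sum_congr rfl fun q _ => ?_
    rw [QH.Fsymm]
  have h3 : (∑ p, ∑ q, if p = q then QHF p q else 0) = 0 := by
    refine Finset.sum_eq_zero fun p _ => ?_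
    rw [Finset.sum_ite_eq]
    simp [QH.Fdiag]
  rw [h2, h3, QH.sumfull] at h1
  linarith

/-! ### The numerical inequality -/

lemma QH.arcosh_sqrt (n : ℝ) (hn : 1 ≤ n) :
    arcosh (Real.sqrt n) = Real.log (Real.sqrt n + Real.sqrt (n - 1)) := by
  rw [arcosh, Real.sq_sqrt (by linarith)]

lemma QH.key : 12 * arcosh 9 < QHC := by
  have b145 : (12.04159:ℝ) < Real.sqrt 145 := (Real.lt_sqrt (by norm_num)).2 (by norm_num)
  have b288 : (16.97056:ℝ) < Real.sqrt 288 := (Real.lt_sqrt (by norm_num)).2 (by norm_num)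
  have b73 : (8.544:ℝ) < Real.sqrt 73 := (Real.lt_sqrt (by norm_num)).2 (by norm_num)
  have b72 : (8.48528:ℝ) < Real.sqrt 72 := (Real.lt_sqrt (by norm_num)).2 (by norm_num)
  have b217 : (14.73091:ℝ) < Real.sqrt 217 := (Real.lt_sqrt (by norm_num)).2 (by norm_num)
  have b216 : (14.69693:ℝ) < Real.sqrt 216 := (Real.lt_sqrt (by norm_num)).2 (by norm_num)
  have b80 : Real.sqrt 80 < 8.94428 := (Real.sqrt_lt' (by norm_num)).2 (by norm_num)
  have b80' : (0:ℝ) ≤ Real.sqrt 80 := Real.sqrt_nonneg _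
  have s289 : Real.sqrt 289 = 17 := by
    rw [show (289:ℝ) = 17^2 by norm_num, Real.sqrt_sq] ; norm_num
  have h145 : arcosh (Real.sqrt 145) = Real.log (Real.sqrt 145 + 12) := by
    rw [QH.arcosh_sqrt 145 (by norm_num),
      show (145:ℝ) - 1 = 12^2 by norm_num, Real.sqrt_sq] ; norm_num
  have h289 : arcosh (Real.sqrt 289) = Real.log (17 + Real.sqrt 288) := by
    rw [QH.arcosh_sqrt 289 (by norm_num), s289] ; norm_num
  have h73 : arcosh (Real.sqrt 73) = Real.log (Real.sqrt 73 + Real.sqrt 72) := by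
    rw [QH.arcosh_sqrt 73 (by norm_num)] ; norm_num
  have h217 : arcosh (Real.sqrt 217) = Real.log (Real.sqrt 217 + Real.sqrt 216) := by
    rw [QH.arcosh_sqrt 217 (by norm_num)] ; norm_num
  have h9 : arcosh 9 = Real.log (9 + Real.sqrt 80) := by
    rw [arcosh] ; norm_num
  have hQ : ((9:ℝ) + Real.sqrt 80)^12 <
      (Real.sqrt 145 + 12)^2 * (((17:ℝ) + Real.sqrt 288) *
        ((Real.sqrt 73 + Real.sqrt 72)^4 * (Real.sqrt 217 + Real.sqrt 216)^4)) := by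
    calc ((9:ℝ) + Real.sqrt 80)^12 ≤ (17.94428:ℝ)^12 := by
          gcongr <;> linarith
      _ < (24.04159:ℝ)^2 * ((33.97056:ℝ) * ((17.02928:ℝ)^4 * (29.42784:ℝ)^4)) := by
          norm_num
      _ ≤ _ := by gcongr <;> linarith
  have hlog := Real.log_lt_log (by positivity) hQ
  rw [Real.log_pow,
    Real.log_mul (by positivity) (by positivity),
    Real.log_mul (by positivity) (by positivity),
    Real.log_mul (by positivity) (by positivity),
    Real.log_pow, Real.log_pow, Real.log_pow] at hlog
  push_cast at hlog
  rw [QHC, h145, h289, h73, h217, h9]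
  linarith

/-- For the 24 points `x^σ_ε = (3, 2σ+2ε, 0)` and `y^σ_ε = (3, 0, 2σ+2ε)` in the
quaternionic hyperbolic plane `H²_ℍ` (`σ ∈ {±1}`, `ε ∈ {±i,±j,±k}`), one has
`∑ d(x,x′) + ∑ d(y,y′) − ∑ d(x,y′) > 0` (same-type sums over unordered pairs,
mixed sum over all ordered pairs); hence the geodesic distance on `H²_ℍ` is not
a kernel of negative type. -/
theorem quaternionic_hyperbolic_not_negative_type :
    (let x : Fin 12 → (Fin 3 → Quaternion ℝ) := fun p => ![3, qParam p, 0]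
     let y : Fin 12 → (Fin 3 → Quaternion ℝ) := fun p => ![3, 0, qParam p]
     0 < (∑ p, ∑ q, if p < q then qhypDist (x p) (x q) else 0) +
         (∑ p, ∑ q, if p < q then qhypDist (y p) (y q) else 0) -
         ∑ p, ∑ q, qhypDist (x p) (y q)) ∧
    ¬ (∀ (m : ℕ) (z : Fin m → (Fin 3 → Quaternion ℝ)) (t : Fin m → ℝ),
        (∀ i, (qForm (z i) (z i)).re < 0) → (∑ i, t i) = 0 →
        ∑ i, ∑ j, t i * t j * qhypDist (z i) (z j) ≤ 0) := by
  constructor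
  · dsimp only
    simp only [QH.hdx, QH.hdy, QH.hdxy]
    rw [QH.sumlt]
    have hxy : ∑ _p : Fin 12, ∑ _q : Fin 12, arcosh 9 = 144 * arcosh 9 := by
      simp [Finset.sum_const, Finset.card_univ] ; ring
    rw [hxy]
    have := QH.key
    linarith
  · intro h
    have hneg : ∀ i : Fin (12+12),
        (qForm ((Fin.append (fun p : Fin 12 => ![3, qParam p, 0])
            (fun p : Fin 12 => ![3, 0, qParam p])) i)
          ((Fin.append (fun p : Fin 12 => ![3, qParam p, 0])
            (fun p : Fin 12 => ![3, 0, qParam p])) i)).re < 0 := by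
      intro i
      refine Fin.addCases (fun p => ?_) (fun p => ?_) i <;>
        simp only [Fin.append_left, Fin.append_right]
      · rw [QH.reXX _ (QH.hnormSq p)] ; norm_num
      · rw [QH.reYY _ (QH.hnormSq p)] ; norm_num
    have ht : ∑ i : Fin (12+12),
        (Fin.append (fun _ : Fin 12 => (1:ℝ)) (fun _ : Fin 12 => -1)) i = 0 := by
      rw [Fin.sum_univ_add]
      simp only [Fin.append_left, Fin.append_right]
      norm_num
    have h2 := h (12+12)
      (Fin.append (fun p : Fin 12 => ![3, qParam p, 0]) (fun p : Fin 12 => ![3, 0, qParam p]))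
      (Fin.append (fun _ : Fin 12 => (1:ℝ)) (fun _ : Fin 12 => -1)) hneg ht
    simp only [Fin.sum_univ_add, Fin.append_left, Fin.append_right, one_mul, mul_one,
      neg_mul, mul_neg, neg_neg, QH.hdx, QH.hdy, QH.hdxy, QH.hdyx,
      Finset.sum_neg_distrib, Finset.sum_const, Finset.card_univ, Fintype.card_fin,
      nsmul_eq_mul, Finset.sum_add_distrib] at h2
    push_cast at h2
    have hs := QH.sumfull
    have hk := QH.key
    linarith
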